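/- For a general linear quantum system, define Ker(O_s) := ⋂_{k=0}^{2n-1} Ker(𝒞 (J_n Ω)^k) and Ker(O_s J_n) := ⋂_{k=0}^{2n-1} Ker(𝒞 (J_n Ω)^k J_n). Suppose that Ker(𝒞)^⊥ is orthogonal to Ker(O_s J_n), i.e. every vector in the column space of 𝒞ᴴ is orthogonal to every vector of Ker(O_s J_n). Then: (a) the column space of ℬ is orthogonal to R̃_cō := Ker(O_s J_n)^⊥ ∩ Ker(O_s); and (b) R̃_c̄o := Ker(O_s J_n) ∩ Ker(O_s)^⊥ is contained in Ker(𝒞). -/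

import Mathlib

open Matrix

noncomputable section

/-- `J_k = [I 0; 0 -I]` acting on `ℂ^{2k} = ℂ^k ⊕ ℂ^k`. -/
def Jmat (k : ℕ) : Matrix (Fin k ⊕ Fin k) (Fin k ⊕ Fin k) ℂ :=
  Matrix.fromBlocks 1 0 0 (-1)

/-- Entrywise complex conjugation of a matrix. -/
def mconj {α β : Type} (M : Matrix α β ℂ) : Matrix α β ℂ :=
  M.map (starRingEnd ℂ)

/-- The doubled-up matrix `Δ(U,V) = [U V; conj V  conj U]`. -/
def doubledUp {k r : ℕ} (U V : Matrix (Fin k) (Fin r) ℂ) :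
    Matrix (Fin k ⊕ Fin k) (Fin r ⊕ Fin r) ℂ :=
  Matrix.fromBlocks U V (mconj V) (mconj U)

/-- The ♭-adjoint `X♭ = J_r Xᴴ J_k` of `X ∈ ℂ^{2k×2r}`. -/
def flat {k r : ℕ} (X : Matrix (Fin k ⊕ Fin k) (Fin r ⊕ Fin r) ℂ) :
    Matrix (Fin r ⊕ Fin r) (Fin k ⊕ Fin k) ℂ :=
  Jmat r * Xᴴ * Jmat k

/-- Orthogonal complement of a subspace of `ℂ^ι` w.r.t. the standard Hermitian
inner product `⟪y, x⟫ = (star y) ⬝ᵥ x`. -/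
def orthComp {ι : Type} [Fintype ι] (S : Submodule ℂ (ι → ℂ)) : Submodule ℂ (ι → ℂ) where
  carrier := {x | ∀ y ∈ S, star y ⬝ᵥ x = 0}
  add_mem' := by
    intro a b ha hb y hy
    simp only [Set.mem_setOf_eq] at *
    rw [dotProduct_add, ha y hy, hb y hy, add_zero]
  zero_mem' := by
    intro y hy
    simp
  smul_mem' := by
    intro c x hx y hy
    simp only [Set.mem_setOf_eq] at *
    rw [dotProduct_smul, hx y hy, smul_zero]

/-- The controllable subspace `Im(C_G) = ∑_{k<2n} Im(𝒜ᵏℬ)`. -/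
def ctrbSub (n m : ℕ) (𝒜 : Matrix (Fin n ⊕ Fin n) (Fin n ⊕ Fin n) ℂ)
    (ℬ : Matrix (Fin n ⊕ Fin n) (Fin m ⊕ Fin m) ℂ) : Submodule ℂ (Fin n ⊕ Fin n → ℂ) :=
  ⨆ k ∈ Finset.range (2 * n), LinearMap.range ((𝒜 ^ k * ℬ).mulVecLin)

/-- The unobservable subspace `Ker(O_G) = ⋂_{k<2n} Ker(𝒞𝒜ᵏ)`. -/
def unobsSub (n m : ℕ) (𝒜 : Matrix (Fin n ⊕ Fin n) (Fin n ⊕ Fin n) ℂ)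
    (𝒞 : Matrix (Fin m ⊕ Fin m) (Fin n ⊕ Fin n) ℂ) : Submodule ℂ (Fin n ⊕ Fin n → ℂ) :=
  ⨅ k ∈ Finset.range (2 * n), LinearMap.ker ((𝒞 * 𝒜 ^ k).mulVecLin)

lemma Jmat_conjTranspose (k : ℕ) : (Jmat k)ᴴ = Jmat k := by
  simp [Jmat, Matrix.fromBlocks_conjTranspose]

lemma Jmat_mul_Jmat (k : ℕ) : Jmat k * Jmat k = 1 := by
  simp [Jmat, Matrix.fromBlocks_multiply, ← Matrix.fromBlocks_one]

/-- **Proposition 2.** For a general linear quantum system, if every vector in the column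
space of `𝒞ᴴ` is orthogonal to every vector of `Ker(O_s J_n)`, then (a) the column space
of `ℬ` is orthogonal to `R̃_cō = Ker(O_s J_n)^⊥ ∩ Ker(O_s)`, and (b)
`R̃_c̄o = Ker(O_s J_n) ∩ Ker(O_s)^⊥ ⊆ Ker(𝒞)`. -/
theorem prop_co_vanishing
    (n m : ℕ) (hn : 0 < n) (hm : 0 < m)
    (Ωm Ωp : Matrix (Fin n) (Fin n) ℂ) (Cm Cp : Matrix (Fin m) (Fin n) ℂ)
    (Ω : Matrix (Fin n ⊕ Fin n) (Fin n ⊕ Fin n) ℂ) (hΩ : Ω = doubledUp Ωm Ωp)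
    (hΩH : Ω.IsHermitian)
    (𝒞 : Matrix (Fin m ⊕ Fin m) (Fin n ⊕ Fin n) ℂ) (h𝒞 : 𝒞 = doubledUp Cm Cp)
    (𝒜 : Matrix (Fin n ⊕ Fin n) (Fin n ⊕ Fin n) ℂ)
    (h𝒜 : 𝒜 = (-Complex.I) • (Jmat n * Ω) - (1 / 2 : ℂ) • (flat 𝒞 * 𝒞))
    (ℬ : Matrix (Fin n ⊕ Fin n) (Fin m ⊕ Fin m) ℂ) (hℬ : ℬ = -flat 𝒞)
    (KOs : Submodule ℂ (Fin n ⊕ Fin n → ℂ))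
    (hKOs : KOs = ⨅ k ∈ Finset.range (2 * n),
      LinearMap.ker ((𝒞 * (Jmat n * Ω) ^ k).mulVecLin))
    (KOsJ : Submodule ℂ (Fin n ⊕ Fin n → ℂ))
    (hKOsJ : KOsJ = ⨅ k ∈ Finset.range (2 * n),
      LinearMap.ker ((𝒞 * (Jmat n * Ω) ^ k * Jmat n).mulVecLin))
    (hperp : ∀ x ∈ LinearMap.range (𝒞ᴴ.mulVecLin), ∀ y ∈ KOsJ, star x ⬝ᵥ y = 0) :
    (∀ x ∈ LinearMap.range ℬ.mulVecLin, ∀ y ∈ orthComp KOsJ ⊓ KOs, star x ⬝ᵥ y = 0) ∧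
    (KOsJ ⊓ orthComp KOs ≤ LinearMap.ker 𝒞.mulVecLin) := by
  subst hℬ
  -- key fact: any `z ∈ KOsJ` satisfies `𝒞 z = 0`.
  have hC0 : ∀ z ∈ KOsJ, 𝒞 *ᵥ z = 0 := by
    intro z hz
    funext j
    have h := hperp (𝒞ᴴ *ᵥ Pi.single j 1)
      ⟨Pi.single j 1, by simp [Matrix.mulVecLin_apply]⟩ z hz
    rw [Matrix.star_mulVec, Matrix.conjTranspose_conjTranspose,
      ← Matrix.dotProduct_mulVec] at h
    simpa [dotProduct, Pi.single_apply, apply_ite, Finset.sum_ite_eq] using h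
  -- `J` maps `KOs` into `KOsJ`.
  have hJmem : ∀ y ∈ KOs, Jmat n *ᵥ y ∈ KOsJ := by
    intro y hy
    rw [hKOs] at hy
    rw [hKOsJ]
    simp only [Submodule.mem_iInf, LinearMap.mem_ker, Matrix.mulVecLin_apply] at hy ⊢
    intro k hk
    rw [Matrix.mulVec_mulVec, Matrix.mul_assoc, Jmat_mul_Jmat, Matrix.mul_one]
    exact hy k hk
  constructor
  · rintro x ⟨v, rfl⟩ y ⟨hy1, hy2⟩
    have hCJy : 𝒞 *ᵥ (Jmat n *ᵥ y) = 0 := hC0 _ (hJmem y hy2)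
    rw [Matrix.mulVecLin_apply, Matrix.star_mulVec, ← Matrix.dotProduct_mulVec]
    have hH : (-flat 𝒞)ᴴ = -(Jmat m * 𝒞 * Jmat n) := by
      simp [flat, Matrix.conjTranspose_mul, Jmat_conjTranspose, Matrix.mul_assoc]
    rw [hH]
    rw [Matrix.neg_mulVec, Matrix.mul_assoc, ← Matrix.mulVec_mulVec,
      ← Matrix.mulVec_mulVec, hCJy]
    simp
  · rintro y ⟨hy1, hy2⟩
    simp only [SetLike.mem_coe, LinearMap.mem_ker, Matrix.mulVecLin_apply] at *
    exact hC0 y hy1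


end
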